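/- Let A = ⊕_{n∈ℤ} A_n be a noetherian ℤ-graded commutative ring. Then A is a finitely generated A_0-algebra. -/

import Mathlib

variable {A : Type*} [CommRing A]
variable (𝒜 : ℤ → AddSubgroup A) [GradedRing 𝒜]

/-- The degree-zero subring `A₀` acts on `A` by multiplication, making `A` an
`A₀`-algebra. -/
instance gradeZeroAlgebra : Algebra (𝒜 0) A :=
  RingHom.toAlgebra
    { toFun := Subtype.val, map_one' := rfl, map_mul' := fun _ _ => rfl,
      map_zero' := rfl, map_add' := fun _ _ => rfl }

lemma GY.decompose_mul_right {a b : A} {i : ℤ} (hb : b ∈ 𝒜 i) (n : ℤ) :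
    (DirectSum.decompose 𝒜 (a * b) n : A) = (DirectSum.decompose 𝒜 a (n - i) : A) * b := by
  lift b to 𝒜 i using hb
  rw [DirectSum.decompose_mul, DirectSum.decompose_coe]
  exact DirectSum.coe_mul_of_apply_aux _ _ _ (fun x => by omega)

lemma GY.exists_finset_span [IsNoetherianRing A] (s : Set A) :
    ∃ t : Finset A, (t : Set A) ⊆ s ∧ Ideal.span s ≤ Ideal.span (t : Set A) := by
  classical
  obtain ⟨u, hu⟩ := IsNoetherian.noetherian (Ideal.span s)
  have hmem : ∀ x ∈ u, x ∈ Submodule.span A s := fun x hxu => by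
    have := Submodule.subset_span (R := A) (s := (u : Set A)) hxu
    rwa [hu] at this
  choose! t ht1 ht2 using fun x hxu => Submodule.mem_span_finite_of_mem_span (hmem x hxu)
  refine ⟨u.biUnion t, ?_, ?_⟩
  · intro y hy
    simp only [Finset.coe_biUnion, Set.mem_iUnion] at hy
    obtain ⟨x, hxu, hyx⟩ := hy
    exact ht1 x hxu hyx
  · rw [show (Ideal.span s : Submodule A A) = Submodule.span A ↑u from hu.symm,
      Submodule.span_le]
    intro x hxu
    refine Ideal.span_mono ?_ (ht2 x hxu)
    intro y hy
    simp only [Finset.coe_biUnion, Set.mem_iUnion]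
    exact ⟨x, hxu, hy⟩

lemma GY.extract (t : Finset A) (deg : A → ℤ) (ht : ∀ x ∈ t, x ∈ 𝒜 (deg x))
    {n : ℤ} {a : A} (ha : a ∈ 𝒜 n) (haspan : a ∈ Ideal.span (t : Set A)) :
    ∃ r : A → A, (∀ x ∈ t, r x ∈ 𝒜 (n - deg x)) ∧ a = ∑ x ∈ t, r x * x := by
  obtain ⟨c, -, hc⟩ := Submodule.mem_span_finset.mp haspan
  refine ⟨fun x => (DirectSum.decompose 𝒜 (c x) (n - deg x) : A),
    fun x _ => SetLike.coe_mem _, ?_⟩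
  have h1 : a = GradedRing.proj 𝒜 n a := by
    rw [GradedRing.proj_apply, DirectSum.decompose_of_mem_same 𝒜 ha]
  rw [h1, ← hc, map_sum]
  refine Finset.sum_congr rfl fun x hx => ?_
  rw [smul_eq_mul, GradedRing.proj_apply, GY.decompose_mul_right 𝒜 (ht x hx)]

/-- Goto–Yamagishi for `L = ℤ`: a noetherian `ℤ`-graded commutative ring is a finitely
generated algebra over its degree-zero subring. -/
theorem zGraded_noetherian_finiteType [IsNoetherianRing A] :
    Algebra.FiniteType (𝒜 0) A := by
  classical
  obtain ⟨F, hFsub, hFspan⟩ := GY.exists_finset_span (A := A) {x | ∃ m : ℤ, 0 < m ∧ x ∈ 𝒜 m}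
  obtain ⟨G, hGsub, hGspan⟩ := GY.exists_finset_span (A := A) {x | ∃ m : ℤ, m < 0 ∧ x ∈ 𝒜 m}
  choose! df hdfpos hdfmem using fun x (hx : x ∈ F) => hFsub hx
  choose! dg hdgneg hdgmem using fun x (hx : x ∈ G) => hGsub hx
  set d : ℤ := ((F.sup fun x => (df x).toNat : ℕ) : ℤ) with hd
  have hd0 : 0 ≤ d := Int.ofNat_nonneg _
  have hdle : ∀ x ∈ F, df x ≤ d := by
    intro x hx
    have h1 : (df x).toNat ≤ F.sup fun x => (df x).toNat := Finset.le_sup (f := fun x => (df x).toNat) hx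
    omega
  choose w hw1 hw2 using fun m : ℤ => GY.exists_finset_span (A := A) (𝒜 m : Set A)
  set T : Finset A := F ∪ G ∪ (Finset.Icc (-d) (-1)).biUnion w with hT
  set S : Subalgebra (𝒜 0) A := Algebra.adjoin (𝒜 0) (T : Set A) with hS
  have hzero : ∀ a : A, a ∈ 𝒜 0 → a ∈ S := fun a ha => S.algebraMap_mem ⟨a, ha⟩
  have hFS : ∀ x ∈ F, x ∈ S := fun x hx => Algebra.subset_adjoin (by
    rw [Finset.mem_coe, hT]
    simp only [Finset.mem_union]
    exact Or.inl (Or.inl hx))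
  have hGS : ∀ x ∈ G, x ∈ S := fun x hx => Algebra.subset_adjoin (by
    rw [Finset.mem_coe, hT]
    simp only [Finset.mem_union]
    exact Or.inl (Or.inr hx))
  have hwS : ∀ m : ℤ, -d ≤ m → m ≤ -1 → ∀ x ∈ w m, x ∈ S := fun m h1 h2 x hx =>
    Algebra.subset_adjoin (by
      rw [Finset.mem_coe, hT]
      simp only [Finset.mem_union, Finset.mem_biUnion]
      exact Or.inr ⟨m, Finset.mem_Icc.mpr ⟨h1, h2⟩, hx⟩)
  have hwin : ∀ m : ℤ, -d ≤ m → m ≤ -1 → ∀ a ∈ 𝒜 m, a ∈ S := by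
    intro m h1 h2 a ha
    have haspan : a ∈ Ideal.span ((w m : Finset A) : Set A) :=
      hw2 m (Ideal.subset_span ha)
    obtain ⟨r, hr, hsum⟩ := GY.extract 𝒜 (w m) (fun _ => m) (fun x hx => hw1 m hx) ha haspan
    rw [hsum]
    refine Subalgebra.sum_mem S fun x hx => S.mul_mem ?_ (hwS m h1 h2 x hx)
    have hrx := hr x hx
    rw [sub_self] at hrx
    exact hzero _ hrx
  have hpos : ∀ k : ℕ, ∀ a ∈ 𝒜 ((k : ℤ) - d), a ∈ S := by
    intro k
    induction k using Nat.strong_induction_on with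
    | _ k IH =>
    intro a ha
    set n : ℤ := (k : ℤ) - d with hn
    rcases lt_trichotomy n 0 with hlt | heq | hgt
    · exact hwin n (by omega) (by omega) a ha
    · exact hzero a (heq ▸ ha)
    · have haspan : a ∈ Ideal.span (F : Set A) :=
        hFspan (Ideal.subset_span ⟨n, hgt, ha⟩)
      obtain ⟨r, hr, hsum⟩ := GY.extract 𝒜 F df (fun x hx => hdfmem x hx) ha haspan
      rw [hsum]
      refine Subalgebra.sum_mem S fun x hx => S.mul_mem ?_ (hFS x hx)
      have h1 : 0 < df x := hdfpos x hx
      have h2 : df x ≤ d := hdle x hx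
      refine IH (n - df x + d).toNat (by omega) _ ?_
      rw [show (((n - df x + d).toNat : ℤ)) - d = n - df x by omega]
      exact hr x hx
  have hneg : ∀ k : ℕ, ∀ a ∈ 𝒜 (-1 - (k : ℤ)), a ∈ S := by
    intro k
    induction k using Nat.strong_induction_on with
    | _ k IH =>
    intro a ha
    set n : ℤ := -1 - (k : ℤ) with hn
    have haspan : a ∈ Ideal.span (G : Set A) :=
      hGspan (Ideal.subset_span ⟨n, by omega, ha⟩)
    obtain ⟨r, hr, hsum⟩ := GY.extract 𝒜 G dg (fun x hx => hdgmem x hx) ha haspan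
    rw [hsum]
    refine Subalgebra.sum_mem S fun x hx => S.mul_mem ?_ (hGS x hx)
    have h1 : dg x < 0 := hdgneg x hx
    by_cases hc : -d ≤ n - dg x
    · refine hpos (n - dg x + d).toNat _ ?_
      rw [show (((n - dg x + d).toNat : ℤ)) - d = n - dg x by omega]
      exact hr x hx
    · refine IH (-1 - (n - dg x)).toNat (by omega) _ ?_
      rw [show (-1 - (((-1 - (n - dg x)).toNat : ℤ))) = n - dg x by omega]
      exact hr x hx
  refine ⟨⟨T, ?_⟩⟩
  rw [eq_top_iff]
  intro a _
  rw [← DirectSum.sum_support_decompose 𝒜 a]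
  refine Subalgebra.sum_mem _ fun i _ => ?_
  by_cases hc : -d ≤ i
  · refine hpos (i + d).toNat _ ?_
    rw [show (((i + d).toNat : ℤ)) - d = i by omega]
    exact SetLike.coe_mem _
  · refine hneg (-1 - i).toNat _ ?_
    rw [show (-1 - (((-1 - i).toNat : ℤ))) = i by omega]
    exact SetLike.coe_mem _
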